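/- There exists a constant C > 0 such that for all 0 < v < u and all y, z ∈ ℝ, ∫_ℝ |G(u,x,y) − G(v,x,z)| dx ≤ C·(v^{−1/2}·(u−v)^{1/2} + v^{−1/4}·|y−z|^{1/2}). -/

import Mathlib

open MeasureTheory Real

/-- The Gaussian heat kernel `G(t,x,y) = (2πt)^{-1/2} exp(-(x-y)²/(2t))` for `t > 0`,
and `0` for `t ≤ 0`. -/
noncomputable def heatKernel (t x y : ℝ) : ℝ :=
  if 0 < t then (1 / Real.sqrt (2 * Real.pi * t)) * Real.exp (-(x - y) ^ 2 / (2 * t)) else 0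

lemma heatKernel_eq {t : ℝ} (ht : 0 < t) (x y : ℝ) :
    heatKernel t x y = (1 / Real.sqrt (2 * Real.pi * t)) * Real.exp (-(x - y) ^ 2 / (2 * t)) :=
  if_pos ht

lemma heatKernel_nonneg (t x y : ℝ) : 0 ≤ heatKernel t x y := by
  unfold heatKernel; split
  · positivity
  · exact le_rfl

lemma heatKernel_continuous {t : ℝ} (ht : 0 < t) (y : ℝ) :
    Continuous (fun x => heatKernel t x y) := by
  simp only [heatKernel_eq ht]
  continuity

lemma heatKernel_integrable {t : ℝ} (ht : 0 < t) (y : ℝ) :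
    Integrable (fun x => heatKernel t x y) := by
  simp only [heatKernel_eq ht]
  have h : Integrable (fun x : ℝ => Real.exp (-(1 / (2 * t)) * x ^ 2)) :=
    integrable_exp_neg_mul_sq (by positivity)
  have h2 := (h.comp_sub_right y).const_mul (1 / Real.sqrt (2 * Real.pi * t))
  refine h2.congr (Filter.Eventually.of_forall fun x => ?_)
  ring_nf

lemma heatKernel_integral_eq_one {t : ℝ} (ht : 0 < t) (y : ℝ) :
    ∫ x : ℝ, heatKernel t x y = 1 := by
  simp only [heatKernel_eq ht]
  rw [MeasureTheory.integral_const_mul]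
  have h1 : ∀ x : ℝ, Real.exp (-(x - y) ^ 2 / (2 * t)) =
      (fun u => Real.exp (-(1 / (2 * t)) * u ^ 2)) (x - y) := by
    intro x; simp only; ring_nf
  simp only [h1]
  rw [MeasureTheory.integral_sub_right_eq_self (μ := volume)
    (fun u : ℝ => Real.exp (-(1 / (2 * t)) * u ^ 2)) y]
  rw [integral_gaussian]
  have h2 : π / (1 / (2 * t)) = 2 * π * t := by field_simp
  rw [h2]
  rw [one_div, inv_mul_cancel₀ (by positivity : Real.sqrt (2 * π * t) ≠ 0)]

lemma sq_mul_heatKernel_integrable {t : ℝ} (ht : 0 < t) (y : ℝ) :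
    Integrable (fun x : ℝ => (x - y) ^ 2 * heatKernel t x y) := by
  simp only [heatKernel_eq ht]
  have h : Integrable (fun x : ℝ => x ^ ((2:ℝ)) * Real.exp (-(1 / (2 * t)) * x ^ 2)) :=
    integrable_rpow_mul_exp_neg_mul_sq (by positivity) (by norm_num)
  have h' : Integrable (fun x : ℝ => x ^ (2:ℕ) * Real.exp (-(1 / (2 * t)) * x ^ 2)) := by
    refine h.congr (Filter.Eventually.of_forall fun x => ?_)
    simp only
    rw [show ((2:ℝ)) = ((2:ℕ):ℝ) by norm_num, Real.rpow_natCast]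
  have h2 := (h'.comp_sub_right y).const_mul (1 / Real.sqrt (2 * Real.pi * t))
  refine h2.congr (Filter.Eventually.of_forall fun x => ?_)
  simp only
  ring_nf

lemma key_exp_ineq (s : ℝ) (hs : 0 ≤ s) : s * Real.exp (-s) ≤ Real.exp (-(s/2)) := by
  have h1 : s ≤ Real.exp (s / 2) := by
    have h2 := Real.add_one_le_exp (s / 4)
    have h3 : Real.exp (s / 2) = Real.exp (s / 4) * Real.exp (s / 4) := by
      rw [← Real.exp_add]; ring_nf
    nlinarith [Real.exp_pos (s / 4), sq_nonneg (1 - s / 4)]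
  calc s * Real.exp (-s) ≤ Real.exp (s/2) * Real.exp (-s) := by
        exact mul_le_mul_of_nonneg_right h1 (Real.exp_pos _).le
    _ = Real.exp (-(s/2)) := by rw [← Real.exp_add]; ring_nf

lemma sq_mul_heatKernel_pointwise {t : ℝ} (ht : 0 < t) (x y : ℝ) :
    (x - y) ^ 2 * heatKernel t x y ≤
      (1 / Real.sqrt (2 * Real.pi * t)) * (2 * t) * Real.exp (-(x - y) ^ 2 / (4 * t)) := by
  rw [heatKernel_eq ht]
  have h := key_exp_ineq ((x - y) ^ 2 / (2 * t)) (by positivity)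
  have e1 : (x - y) ^ 2 * Real.exp (-(x - y) ^ 2 / (2 * t)) =
      (2 * t) * (((x - y) ^ 2 / (2 * t)) * Real.exp (-((x - y) ^ 2 / (2 * t)))) := by
    rw [neg_div]; field_simp
  have e2 : Real.exp (-((x - y) ^ 2 / (2 * t) / 2)) = Real.exp (-(x - y) ^ 2 / (4 * t)) := by
    congr 1; ring
  calc (x - y) ^ 2 * (1 / Real.sqrt (2 * Real.pi * t) * Real.exp (-(x - y) ^ 2 / (2 * t)))
      = (1 / Real.sqrt (2 * Real.pi * t)) * ((x - y) ^ 2 * Real.exp (-(x - y) ^ 2 / (2 * t))) := by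
        ring
    _ ≤ (1 / Real.sqrt (2 * Real.pi * t)) * ((2 * t) * Real.exp (-(x - y) ^ 2 / (4 * t))) := by
        rw [e1]
        refine mul_le_mul_of_nonneg_left ?_ (by positivity)
        refine mul_le_mul_of_nonneg_left ?_ (by positivity)
        rw [← e2]; exact h
    _ = (1 / Real.sqrt (2 * Real.pi * t)) * (2 * t) * Real.exp (-(x - y) ^ 2 / (4 * t)) := by ring

lemma sq_mul_heatKernel_integral_le {t : ℝ} (ht : 0 < t) (y : ℝ) :
    ∫ x : ℝ, (x - y) ^ 2 * heatKernel t x y ≤ 4 * t := by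
  have hBint : Integrable (fun x : ℝ =>
      (1 / Real.sqrt (2 * Real.pi * t)) * (2 * t) * Real.exp (-(x - y) ^ 2 / (4 * t))) := by
    have h : Integrable (fun x : ℝ => Real.exp (-(1 / (4 * t)) * x ^ 2)) :=
      integrable_exp_neg_mul_sq (by positivity)
    have h2 := (h.comp_sub_right y).const_mul ((1 / Real.sqrt (2 * Real.pi * t)) * (2 * t))
    refine h2.congr (Filter.Eventually.of_forall fun x => ?_)
    simp only; ring_nf
  have hmono := integral_mono (sq_mul_heatKernel_integrable ht y) hBint
    (fun x => sq_mul_heatKernel_pointwise ht x y)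
  refine hmono.trans ?_
  rw [MeasureTheory.integral_const_mul]
  have h1 : ∀ x : ℝ, Real.exp (-(x - y) ^ 2 / (4 * t)) =
      (fun u => Real.exp (-(1 / (4 * t)) * u ^ 2)) (x - y) := by
    intro x; simp only; ring_nf
  simp only [h1]
  rw [MeasureTheory.integral_sub_right_eq_self (μ := volume)
    (fun u : ℝ => Real.exp (-(1 / (4 * t)) * u ^ 2)) y]
  rw [integral_gaussian]
  have h2 : π / (1 / (4 * t)) = (2:ℝ) * (2 * π * t) := by field_simp; ring
  rw [h2, Real.sqrt_mul (by norm_num : (0:ℝ) ≤ 2) (2 * π * t)]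
  have hs2 : Real.sqrt 2 ≤ 2 := by
    nlinarith [Real.sq_sqrt (by norm_num : (0:ℝ) ≤ 2), Real.sqrt_nonneg 2]
  have hst : Real.sqrt (2 * π * t) > 0 := by positivity
  calc 1 / Real.sqrt (2 * π * t) * (2 * t) * (Real.sqrt 2 * Real.sqrt (2 * π * t))
      = (2 * t) * Real.sqrt 2 := by field_simp
    _ ≤ 4 * t := by nlinarith

lemma hasDerivAt_heatKernel_time (x y : ℝ) {t : ℝ} (ht : 0 < t) :
    HasDerivAt (fun s => heatKernel s x y)
      (((x - y) ^ 2 / (2 * t ^ 2) - 1 / (2 * t)) * heatKernel t x y) t := by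
  set c : ℝ := (x - y) ^ 2 with hc
  have hA : (0:ℝ) < 2 * π * t := by positivity
  have hS : Real.sqrt (2 * π * t) ≠ 0 := by positivity
  -- derivative of the sqrt part
  have h0 : HasDerivAt (fun s : ℝ => 2 * π * s) (2 * π) t := by
    simpa using (hasDerivAt_id t).const_mul (2 * π)
  have hsq : HasDerivAt (fun s : ℝ => Real.sqrt (2 * π * s))
      (2 * π / (2 * Real.sqrt (2 * π * t))) t := h0.sqrt (ne_of_gt hA)
  have hinv : HasDerivAt (fun s : ℝ => (Real.sqrt (2 * π * s))⁻¹)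
      (-(2 * π / (2 * Real.sqrt (2 * π * t))) / (Real.sqrt (2 * π * t)) ^ 2) t := hsq.inv hS
  -- derivative of the exp part
  have h5 : HasDerivAt (fun s : ℝ => -c / 2 * s⁻¹) (-c / 2 * -(t ^ 2)⁻¹) t :=
    (hasDerivAt_inv ht.ne').const_mul (-c / 2)
  have hexp : HasDerivAt (fun s : ℝ => Real.exp (-c / 2 * s⁻¹))
      (Real.exp (-c / 2 * t⁻¹) * (-c / 2 * -(t ^ 2)⁻¹)) t := h5.exp
  have hprod := hinv.mul hexp
  have heq : (fun s => heatKernel s x y) =ᶠ[nhds t]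
      (fun s : ℝ => (Real.sqrt (2 * π * s))⁻¹ * Real.exp (-c / 2 * s⁻¹)) := by
    filter_upwards [eventually_gt_nhds ht] with s hs
    rw [heatKernel_eq hs, one_div]
    congr 1
    rw [Real.exp_eq_exp]
    rw [hc]; ring
  refine (HasDerivAt.congr_of_eventuallyEq ?_ heq)
  refine hprod.congr_deriv (Eq.symm ?_)
  rw [heatKernel_eq ht, one_div]
  have hsq2 : (Real.sqrt (2 * π * t)) ^ 2 = 2 * π * t := Real.sq_sqrt hA.le
  have hexpeq : Real.exp (-c / 2 * t⁻¹) = Real.exp (-c / (2 * t)) :=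
    Real.exp_eq_exp.mpr (by ring)
  have hexpeq2 : Real.exp (-(x - y) ^ 2 / (2 * t)) = Real.exp (-c / (2 * t)) :=
    Real.exp_eq_exp.mpr (by rw [hc])
  rw [hexpeq, hexpeq2]
  generalize hSdef : Real.sqrt (2 * π * t) = S at hsq2 hS ⊢
  generalize Real.exp (-c / (2 * t)) = E
  have key : -(2 * π / (2 * S)) / S ^ 2 = -(1 / (2 * t)) * S⁻¹ := by
    field_simp
    linear_combination hsq2
  rw [key]
  field_simp
  ring

lemma hasDerivAt_heatKernel_space {v : ℝ} (hv : 0 < v) (x : ℝ) (w : ℝ) :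
    HasDerivAt (fun w => heatKernel v x w)
      (((x - w) / v) * heatKernel v x w) w := by
  have h1 : HasDerivAt (fun w : ℝ => x - w) (-1) w := (hasDerivAt_id w).const_sub x
  have h2 : HasDerivAt (fun w : ℝ => (x - w) ^ 2) (2 * (x - w) ^ 1 * (-1)) w := h1.pow 2
  have h3 : HasDerivAt (fun w : ℝ => -(x - w) ^ 2 / (2 * v))
      (-(2 * (x - w) ^ 1 * (-1)) / (2 * v)) w := h2.neg.div_const (2 * v)
  have h4 := h3.exp
  have h5 := h4.const_mul (1 / Real.sqrt (2 * Real.pi * v))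
  have heq : (fun w => heatKernel v x w) =
      (fun w : ℝ => 1 / Real.sqrt (2 * Real.pi * v) * Real.exp (-(x - w) ^ 2 / (2 * v))) := by
    funext w; rw [heatKernel_eq hv]
  rw [heq]
  refine h5.congr_deriv (Eq.symm ?_)
  rw [heatKernel_eq hv]
  ring

lemma heatKernel_jointly_measurable (y : ℝ) :
    Measurable (fun p : ℝ × ℝ => heatKernel p.2 p.1 y) := by
  unfold heatKernel
  refine Measurable.ite ?_ ?_ measurable_const
  · exact measurableSet_lt measurable_const measurable_snd
  · refine Measurable.mul ?_ ?_
    · exact (measurable_const.div ((measurable_const.mul measurable_snd).sqrt))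
    · exact (((measurable_fst.sub measurable_const).pow measurable_const).neg.div
        (measurable_const.mul measurable_snd)).exp

lemma heatKernel_trivial_bound {t s : ℝ} (ht : 0 < t) (hs : 0 < s) (y z : ℝ) :
    ∫ x : ℝ, |heatKernel t x y - heatKernel s x z| ≤ 2 := by
  have h1 : Integrable (fun x : ℝ => |heatKernel t x y - heatKernel s x z|) :=
    ((heatKernel_integrable ht y).sub (heatKernel_integrable hs z)).abs
  have h2 : Integrable (fun x : ℝ => heatKernel t x y + heatKernel s x z) :=
    (heatKernel_integrable ht y).add (heatKernel_integrable hs z)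
  have h3 := integral_mono h1 h2 (fun x => by
    have := abs_sub (heatKernel t x y) (heatKernel s x z)
    calc |heatKernel t x y - heatKernel s x z| ≤ |heatKernel t x y| + |heatKernel s x z| :=
          abs_sub _ _
      _ = heatKernel t x y + heatKernel s x z := by
          rw [abs_of_nonneg (heatKernel_nonneg _ _ _), abs_of_nonneg (heatKernel_nonneg _ _ _)])
  refine h3.trans ?_
  rw [integral_add (heatKernel_integrable ht y) (heatKernel_integrable hs z),
    heatKernel_integral_eq_one ht y, heatKernel_integral_eq_one hs z]
  norm_num

lemma partA {v u : ℝ} (hv : 0 < v) (hvu : v ≤ u) (y : ℝ) :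
    ∫ x : ℝ, |heatKernel u x y - heatKernel v x y| ≤ 3 * ((u - v) / v) := by
  have hu : 0 < u := hv.trans_le hvu
  set F : ℝ → ℝ → ℝ :=
    fun t x => ((x - y) ^ 2 / (2 * t ^ 2) - 1 / (2 * t)) * heatKernel t x y with hF
  -- interval integrability of t ↦ F t x on [v,u]
  have hcontF : ∀ x : ℝ, ContinuousOn (fun t => F t x) (Set.uIcc v u) := by
    intro x t htm
    rw [Set.uIcc_of_le hvu] at htm
    have htpos : 0 < t := hv.trans_le htm.1
    apply ContinuousAt.continuousWithinAt
    have h1 : ContinuousAt (fun t : ℝ => (x - y) ^ 2 / (2 * t ^ 2) - 1 / (2 * t)) t := by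
      refine ContinuousAt.sub ?_ ?_
      · exact continuousAt_const.div (by fun_prop) (by positivity)
      · exact continuousAt_const.div (by fun_prop) (by positivity)
    exact h1.mul (hasDerivAt_heatKernel_time x y htpos).continuousAt
  have hint : ∀ x : ℝ, IntervalIntegrable (fun t => F t x) volume v u :=
    fun x => (hcontF x).intervalIntegrable
  -- FTC
  have hFTC : ∀ x : ℝ, heatKernel u x y - heatKernel v x y = ∫ t in v..u, F t x := by
    intro x
    refine (intervalIntegral.integral_eq_sub_of_hasDerivAt (f := fun t => heatKernel t x y) ?_ (hint x)).symm
    intro t htm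
    rw [Set.uIcc_of_le hvu] at htm
    exact hasDerivAt_heatKernel_time x y (hv.trans_le htm.1)
  -- measurability of the uncurried function
  have Fmeas : Measurable (fun p : ℝ × ℝ => F p.2 p.1) := by
    refine Measurable.mul ?_ (heatKernel_jointly_measurable y)
    refine Measurable.sub ?_ ?_
    · exact ((measurable_fst.sub measurable_const).pow measurable_const).div
        (measurable_const.mul (measurable_snd.pow measurable_const))
    · exact measurable_const.div (measurable_const.mul measurable_snd)
  -- main chain
  have hnn : 0 ≤ᵐ[volume] fun x : ℝ => |heatKernel u x y - heatKernel v x y| :=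
    Filter.Eventually.of_forall fun x => abs_nonneg _
  have hmeas : AEStronglyMeasurable
      (fun x : ℝ => |heatKernel u x y - heatKernel v x y|) volume :=
    (((heatKernel_continuous hu y).sub (heatKernel_continuous hv y)).abs).aestronglyMeasurable
  rw [MeasureTheory.integral_eq_lintegral_of_nonneg_ae hnn hmeas]
  have hsub : (0:ℝ) ≤ u - v := sub_nonneg.mpr hvu
  refine ENNReal.toReal_le_of_le_ofReal (by positivity) ?_
  calc ∫⁻ x : ℝ, ENNReal.ofReal |heatKernel u x y - heatKernel v x y|
      ≤ ∫⁻ x : ℝ, ∫⁻ t in Set.Ioc v u, ENNReal.ofReal |F t x| := by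
        refine lintegral_mono fun x => ?_
        rw [hFTC x]
        have h1 : |∫ t in v..u, F t x| ≤ ∫ t in Set.Ioc v u, |F t x| := by
          have h2 := intervalIntegral.norm_integral_le_integral_norm_uIoc
            (f := fun t => F t x) (a := v) (b := u) (μ := volume)
          simp only [Real.norm_eq_abs] at h2
          rwa [Set.uIoc_of_le hvu] at h2
        refine le_trans (ENNReal.ofReal_le_ofReal h1) ?_
        rw [MeasureTheory.ofReal_integral_eq_lintegral_ofReal
          (((intervalIntegrable_iff_integrableOn_Ioc_of_le hvu).mp (hint x)).abs)
          (Filter.Eventually.of_forall fun t => abs_nonneg _)]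
    _ = ∫⁻ t in Set.Ioc v u, ∫⁻ x : ℝ, ENNReal.ofReal |F t x| := by
        refine MeasureTheory.lintegral_lintegral_swap ?_
        exact (Fmeas.abs.ennreal_ofReal).aemeasurable
    _ ≤ ∫⁻ _t in Set.Ioc v u, ENNReal.ofReal (3 / v) := by
        refine lintegral_mono_ae ((ae_restrict_iff' measurableSet_Ioc).mpr
          (Filter.Eventually.of_forall fun t ht => ?_))
        have htpos : 0 < t := hv.trans ht.1
        have htv : v ≤ t := ht.1.le
        set B : ℝ → ℝ := fun x => (1 / (2 * t ^ 2)) * ((x - y) ^ 2 * heatKernel t x y)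
          + (1 / (2 * t)) * heatKernel t x y with hB
        have hptw : ∀ x : ℝ, |F t x| ≤ B x := by
          intro x
          rw [hF, hB]
          simp only
          rw [abs_mul, abs_of_nonneg (heatKernel_nonneg t x y)]
          have h3 : |(x - y) ^ 2 / (2 * t ^ 2) - 1 / (2 * t)| ≤
              (x - y) ^ 2 / (2 * t ^ 2) + 1 / (2 * t) := by
            refine (abs_sub _ _).trans ?_
            rw [abs_of_nonneg (by positivity), abs_of_nonneg (by positivity)]
          calc |(x - y) ^ 2 / (2 * t ^ 2) - 1 / (2 * t)| * heatKernel t x y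
              ≤ ((x - y) ^ 2 / (2 * t ^ 2) + 1 / (2 * t)) * heatKernel t x y :=
                mul_le_mul_of_nonneg_right h3 (heatKernel_nonneg t x y)
            _ = 1 / (2 * t ^ 2) * ((x - y) ^ 2 * heatKernel t x y)
                + 1 / (2 * t) * heatKernel t x y := by ring
        have hBint : Integrable B :=
          ((sq_mul_heatKernel_integrable htpos y).const_mul _).add
            ((heatKernel_integrable htpos y).const_mul _)
        have hBnn : 0 ≤ᵐ[volume] B := Filter.Eventually.of_forall fun x => by
          rw [hB]; simp only
          have := heatKernel_nonneg t x y
          have := sq_nonneg (x - y)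
          positivity
        calc ∫⁻ x : ℝ, ENNReal.ofReal |F t x|
            ≤ ∫⁻ x : ℝ, ENNReal.ofReal (B x) :=
              lintegral_mono fun x => ENNReal.ofReal_le_ofReal (hptw x)
          _ = ENNReal.ofReal (∫ x : ℝ, B x) :=
              (MeasureTheory.ofReal_integral_eq_lintegral_ofReal hBint hBnn).symm
          _ ≤ ENNReal.ofReal (3 / v) := by
              refine ENNReal.ofReal_le_ofReal ?_
              rw [hB]
              rw [MeasureTheory.integral_add ((sq_mul_heatKernel_integrable htpos y).const_mul _)
                ((heatKernel_integrable htpos y).const_mul _),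
                MeasureTheory.integral_const_mul, MeasureTheory.integral_const_mul,
                heatKernel_integral_eq_one htpos y]
              have h4 := sq_mul_heatKernel_integral_le htpos y
              have h5 : 1 / (2 * t ^ 2) * ∫ x : ℝ, (x - y) ^ 2 * heatKernel t x y ≤
                  1 / (2 * t ^ 2) * (4 * t) :=
                mul_le_mul_of_nonneg_left h4 (by positivity)
              have h6 : 1 / (2 * t ^ 2) * (4 * t) = 2 / t := by field_simp; ring
              have h7 : (2:ℝ) / t + 1 / (2 * t) ≤ 3 / v := by
                have h8 : (2:ℝ) / t ≤ 2 / v := by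
                  apply div_le_div_of_nonneg_left (by norm_num) hv htv
                have h9 : 1 / (2 * t) ≤ 1 / (2 * v) := by
                  apply div_le_div_of_nonneg_left (by norm_num) (by positivity) (by linarith)
                have h10 : (2:ℝ) / v + 1 / (2 * v) ≤ 3 / v := by
                  rw [div_add_div _ _ (by positivity) (by positivity)]
                  rw [div_le_div_iff₀ (by positivity) (by positivity)]
                  ring_nf; nlinarith
                linarith
              linarith [h5, h6]
    _ = ENNReal.ofReal (3 * ((u - v) / v)) := by
        rw [MeasureTheory.setLIntegral_const, Real.volume_Ioc,
          ← ENNReal.ofReal_mul (by positivity)]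
        congr 1
        ring

lemma partB {v : ℝ} (hv : 0 < v) (y z : ℝ) :
    ∫ x : ℝ, |heatKernel v x y - heatKernel v x z| ≤ 3 * (|y - z| / Real.sqrt v) := by
  set D : ℝ → ℝ → ℝ := fun w x => ((x - w) / v) * heatKernel v x w with hD
  have hcont : ∀ x : ℝ, Continuous (fun w => D w x) := by
    intro x
    have : (fun w => D w x) = fun w : ℝ =>
        ((x - w) / v) * (1 / Real.sqrt (2 * Real.pi * v) * Real.exp (-(x - w) ^ 2 / (2 * v))) := by
      funext w; rw [hD]; simp only [heatKernel_eq hv]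
    rw [this]; continuity
  have hint : ∀ x : ℝ, IntervalIntegrable (fun w => D w x) volume z y :=
    fun x => (hcont x).intervalIntegrable z y
  have hFTC : ∀ x : ℝ, heatKernel v x y - heatKernel v x z = ∫ w in z..y, D w x := by
    intro x
    refine (intervalIntegral.integral_eq_sub_of_hasDerivAt
      (f := fun w => heatKernel v x w) ?_ (hint x)).symm
    intro w _
    exact hasDerivAt_heatKernel_space hv x w
  have Dmeas : Measurable (fun p : ℝ × ℝ => D p.2 p.1) := by
    have hK : Measurable (fun p : ℝ × ℝ => heatKernel v p.1 p.2) := by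
      have : (fun p : ℝ × ℝ => heatKernel v p.1 p.2) = fun p : ℝ × ℝ =>
          1 / Real.sqrt (2 * Real.pi * v) * Real.exp (-(p.1 - p.2) ^ 2 / (2 * v)) := by
        funext p; rw [heatKernel_eq hv]
      rw [this]; fun_prop
    exact (((measurable_fst.sub measurable_snd).div measurable_const)).mul hK
  have hnn : 0 ≤ᵐ[volume] fun x : ℝ => |heatKernel v x y - heatKernel v x z| :=
    Filter.Eventually.of_forall fun x => abs_nonneg _
  have hmeas : AEStronglyMeasurable
      (fun x : ℝ => |heatKernel v x y - heatKernel v x z|) volume :=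
    (((heatKernel_continuous hv y).sub (heatKernel_continuous hv z)).abs).aestronglyMeasurable
  rw [MeasureTheory.integral_eq_lintegral_of_nonneg_ae hnn hmeas]
  refine ENNReal.toReal_le_of_le_ofReal (by positivity) ?_
  calc ∫⁻ x : ℝ, ENNReal.ofReal |heatKernel v x y - heatKernel v x z|
      ≤ ∫⁻ x : ℝ, ∫⁻ w in Set.uIoc z y, ENNReal.ofReal |D w x| := by
        refine lintegral_mono fun x => ?_
        rw [hFTC x]
        have h1 : |∫ w in z..y, D w x| ≤ ∫ w in Set.uIoc z y, |D w x| := by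
          have h2 := intervalIntegral.norm_integral_le_integral_norm_uIoc
            (f := fun w => D w x) (a := z) (b := y) (μ := volume)
          simpa only [Real.norm_eq_abs] using h2
        refine le_trans (ENNReal.ofReal_le_ofReal h1) ?_
        rw [MeasureTheory.ofReal_integral_eq_lintegral_ofReal
          ((intervalIntegrable_iff.mp (hint x)).abs)
          (Filter.Eventually.of_forall fun w => abs_nonneg _)]
    _ = ∫⁻ w in Set.uIoc z y, ∫⁻ x : ℝ, ENNReal.ofReal |D w x| := by
        refine MeasureTheory.lintegral_lintegral_swap ?_
        exact (Dmeas.abs.ennreal_ofReal).aemeasurable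
    _ ≤ ∫⁻ _w in Set.uIoc z y, ENNReal.ofReal (3 / Real.sqrt v) := by
        refine lintegral_mono_ae ((ae_restrict_iff' measurableSet_uIoc).mpr
          (Filter.Eventually.of_forall fun w _ => ?_))
        set B : ℝ → ℝ := fun x => (1 / (2 * Real.sqrt v)) * heatKernel v x w
          + (1 / (2 * Real.sqrt v * v)) * ((x - w) ^ 2 * heatKernel v x w) with hB
        have hsv : 0 < Real.sqrt v := Real.sqrt_pos.mpr hv
        have hptw : ∀ x : ℝ, |D w x| ≤ B x := by
          intro x
          rw [hD, hB]
          simp only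
          rw [abs_mul, abs_of_nonneg (heatKernel_nonneg v x w), abs_div, abs_of_nonneg hv.le]
          have key : |x - w| / v ≤ (v + (x - w) ^ 2) / (2 * Real.sqrt v * v) := by
            rw [div_le_div_iff₀ hv (by positivity)]
            have hamgm : 2 * Real.sqrt v * |x - w| ≤ v + (x - w) ^ 2 := by
              nlinarith [sq_nonneg (Real.sqrt v - |x - w|), Real.sq_sqrt hv.le, sq_abs (x - w)]
            nlinarith [abs_nonneg (x - w), hv.le]
          calc |x - w| / v * heatKernel v x w
              ≤ ((v + (x - w) ^ 2) / (2 * Real.sqrt v * v)) * heatKernel v x w :=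
                mul_le_mul_of_nonneg_right key (heatKernel_nonneg v x w)
            _ = 1 / (2 * Real.sqrt v) * heatKernel v x w
                + 1 / (2 * Real.sqrt v * v) * ((x - w) ^ 2 * heatKernel v x w) := by
                field_simp
        have hBint : Integrable B :=
          ((heatKernel_integrable hv w).const_mul _).add
            ((sq_mul_heatKernel_integrable hv w).const_mul _)
        have hBnn : 0 ≤ᵐ[volume] B := Filter.Eventually.of_forall fun x => by
          rw [hB]; simp only
          have := heatKernel_nonneg v x w
          have := sq_nonneg (x - w)
          positivity
        calc ∫⁻ x : ℝ, ENNReal.ofReal |D w x|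
            ≤ ∫⁻ x : ℝ, ENNReal.ofReal (B x) :=
              lintegral_mono fun x => ENNReal.ofReal_le_ofReal (hptw x)
          _ = ENNReal.ofReal (∫ x : ℝ, B x) :=
              (MeasureTheory.ofReal_integral_eq_lintegral_ofReal hBint hBnn).symm
          _ ≤ ENNReal.ofReal (3 / Real.sqrt v) := by
              refine ENNReal.ofReal_le_ofReal ?_
              rw [hB]
              rw [MeasureTheory.integral_add ((heatKernel_integrable hv w).const_mul _)
                ((sq_mul_heatKernel_integrable hv w).const_mul _),
                MeasureTheory.integral_const_mul, MeasureTheory.integral_const_mul,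
                heatKernel_integral_eq_one hv w]
              have h4 := sq_mul_heatKernel_integral_le hv w
              have h5 : 1 / (2 * Real.sqrt v * v) * ∫ x : ℝ, (x - w) ^ 2 * heatKernel v x w ≤
                  1 / (2 * Real.sqrt v * v) * (4 * v) :=
                mul_le_mul_of_nonneg_left h4 (by positivity)
              have h6 : 1 / (2 * Real.sqrt v * v) * (4 * v) = 2 / Real.sqrt v := by
                field_simp; ring
              have h7 : 1 / (2 * Real.sqrt v) * 1 + 2 / Real.sqrt v ≤ 3 / Real.sqrt v := by
                rw [mul_one, div_add_div _ _ (by positivity : (2 * Real.sqrt v) ≠ 0)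
                  (by positivity : Real.sqrt v ≠ 0),
                  div_le_div_iff₀ (by positivity) (by positivity)]
                nlinarith
              linarith [h5, h6]
    _ = ENNReal.ofReal (3 * (|y - z| / Real.sqrt v)) := by
        rw [MeasureTheory.setLIntegral_const]
        rw [Set.uIoc, Real.volume_Ioc, ← ENNReal.ofReal_mul (by positivity)]
        congr 1
        rw [max_sub_min_eq_abs, abs_sub_comm]
        ring

lemma min_bound {a : ℝ} (ha : 0 ≤ a) : min 2 (3 * a) ≤ 3 * a ^ ((1:ℝ)/2) := by
  rcases le_or_gt 1 a with h | h
  · have h1 : (1:ℝ) ≤ a ^ ((1:ℝ)/2) := by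
      calc (1:ℝ) = (1:ℝ) ^ ((1:ℝ)/2) := (Real.one_rpow _).symm
        _ ≤ a ^ ((1:ℝ)/2) := Real.rpow_le_rpow (by norm_num) h (by norm_num)
    calc min 2 (3 * a) ≤ 2 := min_le_left _ _
      _ ≤ 3 * a ^ ((1:ℝ)/2) := by nlinarith
  · rcases eq_or_lt_of_le ha with h0 | h0
    · simp [← h0]
    · have h1 : a ^ ((1:ℝ)) ≤ a ^ ((1:ℝ)/2) :=
        Real.rpow_le_rpow_of_exponent_ge h0 h.le (by norm_num)
      rw [Real.rpow_one] at h1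
      calc min 2 (3 * a) ≤ 3 * a := min_le_right _ _
        _ ≤ 3 * a ^ ((1:ℝ)/2) := by nlinarith

/-- There is a constant `C > 0` such that for all `0 < v < u` and all `y, z ∈ ℝ`,
`∫_ℝ |G(u,x,y) − G(v,x,z)| dx ≤ C (v^{-1/2} (u−v)^{1/2} + v^{-1/4} |y−z|^{1/2})`. -/
theorem heatKernel_L1_modulus :
    ∃ C > (0 : ℝ), ∀ v u : ℝ, 0 < v → v < u → ∀ y z : ℝ,
      (∫ x : ℝ, |heatKernel u x y - heatKernel v x z|) ≤
        C * (v ^ (-(1:ℝ)/2) * (u - v) ^ ((1:ℝ)/2) + v ^ (-(1:ℝ)/4) * |y - z| ^ ((1:ℝ)/2)) := by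
  refine ⟨3, by norm_num, fun v u hv hvu y z => ?_⟩
  have hu : 0 < u := hv.trans hvu
  have hIu : Integrable (fun x => heatKernel u x y) := heatKernel_integrable hu y
  have hIvy : Integrable (fun x => heatKernel v x y) := heatKernel_integrable hv y
  have hIvz : Integrable (fun x => heatKernel v x z) := heatKernel_integrable hv z
  have h1 : Integrable (fun x : ℝ => |heatKernel u x y - heatKernel v x z|) :=
    (hIu.sub hIvz).abs
  have h2 : Integrable (fun x : ℝ => |heatKernel u x y - heatKernel v x y|) :=
    (hIu.sub hIvy).abs
  have h3 : Integrable (fun x : ℝ => |heatKernel v x y - heatKernel v x z|) :=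
    (hIvy.sub hIvz).abs
  have htri : (∫ x : ℝ, |heatKernel u x y - heatKernel v x z|) ≤
      (∫ x : ℝ, |heatKernel u x y - heatKernel v x y|) +
      (∫ x : ℝ, |heatKernel v x y - heatKernel v x z|) := by
    rw [← MeasureTheory.integral_add h2 h3]
    refine integral_mono h1 (h2.add h3) fun x => ?_
    exact abs_sub_le _ _ _
  have hA : (∫ x : ℝ, |heatKernel u x y - heatKernel v x y|) ≤ min 2 (3 * ((u - v) / v)) :=
    le_min (heatKernel_trivial_bound hu hv y y) (partA hv hvu.le y)
  have hB : (∫ x : ℝ, |heatKernel v x y - heatKernel v x z|) ≤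
      min 2 (3 * (|y - z| / Real.sqrt v)) :=
    le_min (heatKernel_trivial_bound hv hv y z) (partB hv y z)
  have ha : (0:ℝ) ≤ (u - v) / v := div_nonneg (by linarith) hv.le
  have hb : (0:ℝ) ≤ |y - z| / Real.sqrt v := div_nonneg (abs_nonneg _) (Real.sqrt_nonneg v)
  have e1 : ((u - v) / v) ^ ((1:ℝ)/2) = v ^ (-(1:ℝ)/2) * (u - v) ^ ((1:ℝ)/2) := by
    rw [Real.div_rpow (by linarith : (0:ℝ) ≤ u - v) hv.le, div_eq_mul_inv,
      ← Real.rpow_neg hv.le, mul_comm]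
    norm_num
  have e2 : (|y - z| / Real.sqrt v) ^ ((1:ℝ)/2) = v ^ (-(1:ℝ)/4) * |y - z| ^ ((1:ℝ)/2) := by
    rw [Real.div_rpow (abs_nonneg _) (Real.sqrt_nonneg v), Real.sqrt_eq_rpow,
      ← Real.rpow_mul hv.le, div_eq_mul_inv, ← Real.rpow_neg hv.le, mul_comm]
    norm_num
  have hA2 := (hA.trans (min_bound ha)).trans_eq (by rw [e1])
  have hB2 := (hB.trans (min_bound hb)).trans_eq (by rw [e2])
  calc (∫ x : ℝ, |heatKernel u x y - heatKernel v x z|)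
      ≤ (∫ x : ℝ, |heatKernel u x y - heatKernel v x y|) +
        (∫ x : ℝ, |heatKernel v x y - heatKernel v x z|) := htri
    _ ≤ 3 * (v ^ (-(1:ℝ)/2) * (u - v) ^ ((1:ℝ)/2)) +
        3 * (v ^ (-(1:ℝ)/4) * |y - z| ^ ((1:ℝ)/2)) := add_le_add hA2 hB2
    _ = 3 * (v ^ (-(1:ℝ)/2) * (u - v) ^ ((1:ℝ)/2) + v ^ (-(1:ℝ)/4) * |y - z| ^ ((1:ℝ)/2)) := by
        ring
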